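/- Let Ω₁*, Ω₂*, Ω₃* be three disjoint quasi-open subsets of the sphere ∂B_1 ⊂ ℝ^d, each of positive capacity, and for a subset Ω ⊂ ∂B_1 let α(Ω) > 0 be the unique positive root of α(α + d - 2) = λ₁(Ω), where λ₁(Ω) is the first Dirichlet eigenvalue of the Laplace–Beltrami operator on Ω. If for every pair i ≠ j one has α(Ωᵢ*) + α(Ωⱼ*) ≥ 2, with equality for some pair forcing the pair to cover the sphere up to a null set (and hence the third set to have α = +∞), then α(Ω₁*) + α(Ω₂*) + α(Ω₃*) > 3. -/
import Mathlib

open MeasureTheory Metric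

/-- Three-phase spectral partition inequality on the sphere.  For disjoint nonnegligible
subsets `Ω₁*, Ω₂*, Ω₃*` of `∂B_1`, let `α(Ωᵢ*) = a i > 0` be the unique positive root of
`α(α + d - 2) = λ₁(Ωᵢ*)` (first Dirichlet eigenvalue of the Laplace–Beltrami operator).
If `a i + a j ≥ 2` for all `i ≠ j`, and equality for a pair forces that pair to cover
the sphere up to an `H^{d-1}`-null set, then `a 0 + a 1 + a 2 > 3`. -/
theorem three_phase_sphere_partition (d : ℕ) (hd : 2 ≤ d)
    (Ω : Fin 3 → Set (EuclideanSpace ℝ (Fin d)))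
    (hsub : ∀ i, Ω i ⊆ sphere (0 : EuclideanSpace ℝ (Fin d)) 1)
    (hdisj : ∀ i j, i ≠ j → μH[(d : ℝ) - 1] (Ω i ∩ Ω j) = 0)
    (hpos : ∀ i, 0 < μH[(d : ℝ) - 1] (Ω i))
    (lam : Set (EuclideanSpace ℝ (Fin d)) → ℝ) (a : Fin 3 → ℝ)
    (ha : ∀ i, 0 < a i ∧ a i * (a i + d - 2) = lam (Ω i))
    (hFH : ∀ i j, i ≠ j → 2 ≤ a i + a j)
    (hcover : ∀ i j, i ≠ j → a i + a j = 2 →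
      μH[(d : ℝ) - 1] (sphere (0 : EuclideanSpace ℝ (Fin d)) 1 \ (Ω i ∪ Ω j)) = 0) :
    3 < a 0 + a 1 + a 2 := by
  by_contra h
  push_neg at h
  have h02 := hFH 0 2 (by decide)
  have h12 := hFH 1 2 (by decide)
  have h01 : a 0 + a 1 = 2 := by
    have := hFH 0 1 (by decide)
    linarith
  have hN := hcover 0 1 (by decide) h01
  have hsubset : Ω 2 ⊆ (sphere (0 : EuclideanSpace ℝ (Fin d)) 1 \ (Ω 0 ∪ Ω 1)) ∪
      (Ω 2 ∩ Ω 0) ∪ (Ω 2 ∩ Ω 1) := by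
    intro x hx
    rcases Classical.em (x ∈ Ω 0) with h0 | h0
    · exact Or.inl (Or.inr ⟨hx, h0⟩)
    · rcases Classical.em (x ∈ Ω 1) with h1 | h1
      · exact Or.inr ⟨hx, h1⟩
      · exact Or.inl (Or.inl ⟨hsub 2 hx, fun hc => hc.elim h0 h1⟩)
  have hz : μH[(d : ℝ) - 1] (Ω 2) = 0 :=
    measure_mono_null hsubset
      (measure_union_null (measure_union_null hN (hdisj 2 0 (by decide)))
        (hdisj 2 1 (by decide)))
  exact (hpos 2).ne' hz
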